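/- Let N ∈ ℕ, N ≥ 1, θ ∈ ℝ with cos θ ≠ 0, and α : ℤ → ℝ with α_{x+1} − α_x ≡ 2π/N (mod 2π). With D_x = [[e^{iπ/N}cos θ, e^{iα_x}sin θ],[e^{−iα_x}sin θ, −e^{−iπ/N}cos θ]], the ordered product D_{2N} D_{2N−1} ⋯ D_2 D_1 equals the 2×2 identity matrix. -/

import Mathlib

open Complex Matrix

theorem stmt_6 (N : ℕ) (hN : 1 ≤ N) (θ : ℝ) (hcos : Real.cos θ ≠ 0)
    (α : ℤ → ℝ)
    (hα : ∀ x : ℤ, ∃ k : ℤ, α (x + 1) - α x = 2 * Real.pi / N + 2 * Real.pi * k)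
    (D : ℤ → Matrix (Fin 2) (Fin 2) ℂ)
    (hD : ∀ x : ℤ, D x =
      !![Complex.exp (Complex.I * (Real.pi / N)) * Real.cos θ,
         Complex.exp (Complex.I * α x) * Real.sin θ;
         Complex.exp (-Complex.I * α x) * Real.sin θ,
         -Complex.exp (-Complex.I * (Real.pi / N)) * Real.cos θ]) :
    (List.ofFn (fun i : Fin (2 * N) => D ((2 * N : ℤ) - (i : ℤ)))).prod = 1 := by
  have hNR : (N : ℝ) ≠ 0 := Nat.cast_ne_zero.mpr (by omega)
  set w : ℂ := Complex.exp (Complex.I * (2 * Real.pi / N)) with hw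
  set v : ℂ := Complex.exp (-(Complex.I * (2 * Real.pi / N))) with hv
  set P : ℂ := Complex.exp (Complex.I * (Real.pi / N)) with hP
  set Q : ℂ := Complex.exp (-(Complex.I * (Real.pi / N))) with hQ
  have hPP : P * P = w := by
    rw [hP, hw, ← Complex.exp_add]; congr 1; push_cast; ring
  have hQQ : Q * Q = v := by
    rw [hQ, hv, ← Complex.exp_add]; congr 1; push_cast; ring
  have hwQ : w * Q = P := by
    rw [hw, hQ, hP, ← Complex.exp_add]; congr 1; push_cast; ring
  have hvP : v * P = Q := by
    rw [hv, hP, hQ, ← Complex.exp_add]; congr 1; push_cast; ring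
  have hsc : ((Real.sin θ : ℂ))^2 + ((Real.cos θ : ℂ))^2 = 1 := by
    exact_mod_cast congrArg (Complex.ofReal) (Real.sin_sq_add_cos_sq θ)
  have pair : ∀ x : ℤ, D (x + 1) * D x = !![w, 0; 0, v] := by
    intro x
    obtain ⟨k, hk⟩ := hα x
    have hR : α (x + 1) = α x + 2 * Real.pi / N + 2 * Real.pi * k := by linarith
    have hC : ((α (x + 1) : ℝ) : ℂ) = (α x : ℂ) + 2 * (Real.pi : ℂ) / N + 2 * Real.pi * k := by
      rw [hR]; push_cast; ring
    have h1 : Complex.exp (Complex.I * (α (x + 1) : ℂ)) =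
        Complex.exp (Complex.I * (α x : ℂ)) * w := by
      rw [hw, ← Complex.exp_add]
      rw [show Complex.I * ((α (x + 1) : ℝ) : ℂ) =
        Complex.I * (α x : ℂ) + Complex.I * (2 * (Real.pi : ℂ) / N) + (k : ℂ) * (2 * (Real.pi : ℂ) * Complex.I) from by rw [hC]; ring]
      rw [Complex.exp_add, Complex.exp_int_mul_two_pi_mul_I, mul_one]
    have h2 : Complex.exp (-Complex.I * (α (x + 1) : ℂ)) =
        Complex.exp (-Complex.I * (α x : ℂ)) * v := by
      rw [hv, ← Complex.exp_add]
      rw [show -Complex.I * ((α (x + 1) : ℝ) : ℂ) =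
        -Complex.I * (α x : ℂ) + -(Complex.I * (2 * (Real.pi : ℂ) / N)) + ((-k : ℤ) : ℂ) * (2 * (Real.pi : ℂ) * Complex.I) from by rw [hC]; push_cast; ring]
      rw [Complex.exp_add, Complex.exp_int_mul_two_pi_mul_I, mul_one]
    have hEF : Complex.exp (Complex.I * (α x : ℂ)) * Complex.exp (-Complex.I * (α x : ℂ)) = 1 := by
      rw [← Complex.exp_add]; rw [show Complex.I * (α x : ℂ) + -Complex.I * (α x : ℂ) = 0 by ring]
      exact Complex.exp_zero
    rw [hD (x + 1), hD x, Matrix.mul_fin_two]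
    have e1 : -Complex.I * ((Real.pi : ℂ) / N) = -(Complex.I * ((Real.pi : ℂ) / N)) := by ring
    rw [e1, h1, h2]
    set E := Complex.exp (Complex.I * (α x : ℂ))
    set F := Complex.exp (-Complex.I * (α x : ℂ))
    set c := ((Real.cos θ : ℝ) : ℂ)
    set s := ((Real.sin θ : ℝ) : ℂ)
    rw [← hQ]
    rw [show P * c * (P * c) + E * w * s * (F * s) = w from by
          linear_combination c * c * hPP + s * s * w * hEF + w * hsc,
        show P * c * (E * s) + E * w * s * (-Q * c) = 0 from by
          linear_combination (-(c * s * E)) * hwQ,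
        show F * v * s * (P * c) + -Q * c * (F * s) = 0 from by
          linear_combination c * s * F * hvP,
        show F * v * s * (E * s) + -Q * c * (-Q * c) = v from by
          linear_combination s * s * v * hEF + c * c * hQQ + v * hsc]
  have main : ∀ n : ℕ, (List.ofFn (fun i : Fin (2 * n) => D ((2 * n : ℤ) - (i : ℤ)))).prod
      = !![w ^ n, 0; 0, v ^ n] := by
    intro n
    induction n with
    | zero => simp [Matrix.one_fin_two]
    | succ n ih =>
      show (List.ofFn (fun i : Fin (2 * n + 1 + 1) => D ((2 * (n + 1) : ℤ) - (i : ℤ)))).prod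
        = !![w ^ (n + 1), 0; 0, v ^ (n + 1)]
      rw [List.ofFn_succ, List.ofFn_succ, List.prod_cons, List.prod_cons, ← mul_assoc]
      simp only [Fin.val_succ, Fin.val_zero, Nat.cast_zero, Nat.cast_add, Nat.cast_one, sub_zero]
      rw [show (2 * ((n : ℤ) + 1)) = (2 * (n : ℤ) + 1) + 1 from by ring,
          show ((2 * (n : ℤ) + 1) + 1 - (0 + 1)) = 2 * (n : ℤ) + 1 from by ring]
      have htail : (fun i : Fin (2 * n) => D ((2 * (n : ℤ) + 1) + 1 - (((i : Fin (2 * n)) : ℤ) + 1 + 1)))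
          = (fun i : Fin (2 * n) => D (2 * (n : ℤ) - (i : ℤ))) := by
        funext i; congr 1; ring
      rw [htail, ih, pair, Matrix.mul_fin_two]
      rw [show w * w ^ n + 0 * 0 = w ^ (n + 1) from by ring,
          show w * 0 + 0 * v ^ n = 0 from by ring,
          show (0 : ℂ) * w ^ n + v * 0 = 0 from by ring,
          show (0 : ℂ) * 0 + v * v ^ n = v ^ (n + 1) from by ring]
  have hNC : (N : ℂ) ≠ 0 := Nat.cast_ne_zero.mpr (by omega)
  have hwN : w ^ N = 1 := by
    rw [hw, ← Complex.exp_nat_mul,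
      show (N : ℂ) * (Complex.I * (2 * (Real.pi : ℂ) / N)) = 2 * (Real.pi : ℂ) * Complex.I from by
        field_simp]
    exact Complex.exp_two_pi_mul_I
  have hvN : v ^ N = 1 := by
    rw [hv, ← Complex.exp_nat_mul,
      show (N : ℂ) * -(Complex.I * (2 * (Real.pi : ℂ) / N)) = ((-1 : ℤ) : ℂ) * (2 * (Real.pi : ℂ) * Complex.I) from by
        field_simp; ring]
    exact Complex.exp_int_mul_two_pi_mul_I (-1)
  rw [main N, hwN, hvN, ← Matrix.one_fin_two]
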